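/- Let R_1,...,R_m : ℝ → ℝ be functions such that for all 1 ≤ a ≤ b ≤ m, the sum R_{ab} := Σ_{j=a}^b R_j attains its minimum exactly on a compact interval [L_{ab}, U_{ab}], is strictly decreasing on (-∞, L_{ab}] and strictly increasing on [U_{ab}, ∞). If {a,...,b} is partitioned into consecutive index intervals {a_1,...,b_1},...,{a_k,...,b_k} with k ≥ 2, then min_{1≤i≤k} L_{a_i b_i} ≤ L_{ab} ≤ max_{1≤i≤k} L_{a_i b_i}, and min_{1≤i≤k} U_{a_i b_i} ≤ U_{ab} ≤ max_{1≤i≤k} U_{a_i b_i}. -/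
import Mathlib


/-- Cauchy mean value property for minimizing intervals of sums of loss functions. -/
theorem stmt0 (m : ℕ) (R : ℕ → ℝ → ℝ) (L U : ℕ → ℕ → ℝ)
    (hLU : ∀ a b, 1 ≤ a → a ≤ b → b ≤ m → L a b ≤ U a b)
    (hmin : ∀ a b, 1 ≤ a → a ≤ b → b ≤ m → ∀ q : ℝ,
      (∀ r : ℝ, (∑ j ∈ Finset.Icc a b, R j q) ≤ ∑ j ∈ Finset.Icc a b, R j r) ↔
        q ∈ Set.Icc (L a b) (U a b))
    (hanti : ∀ a b, 1 ≤ a → a ≤ b → b ≤ m →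
      StrictAntiOn (fun q => ∑ j ∈ Finset.Icc a b, R j q) (Set.Iic (L a b)))
    (hmono : ∀ a b, 1 ≤ a → a ≤ b → b ≤ m →
      StrictMonoOn (fun q => ∑ j ∈ Finset.Icc a b, R j q) (Set.Ici (U a b)))
    (a b k : ℕ) (ha : 1 ≤ a) (hab : a ≤ b) (hbm : b ≤ m) (hk : 2 ≤ k)
    (aa bb : ℕ → ℕ)
    (haa0 : aa 0 = a) (hbbk : bb (k - 1) = b)
    (hblock : ∀ i < k, aa i ≤ bb i)
    (hconsec : ∀ i, i + 1 < k → aa (i + 1) = bb i + 1) :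
    ((Finset.range k).inf' (Finset.nonempty_range_iff.mpr (by omega))
        fun i => L (aa i) (bb i)) ≤ L a b ∧
    L a b ≤ ((Finset.range k).sup' (Finset.nonempty_range_iff.mpr (by omega))
        fun i => L (aa i) (bb i)) ∧
    ((Finset.range k).inf' (Finset.nonempty_range_iff.mpr (by omega))
        fun i => U (aa i) (bb i)) ≤ U a b ∧
    U a b ≤ ((Finset.range k).sup' (Finset.nonempty_range_iff.mpr (by omega))
        fun i => U (aa i) (bb i)) := by
  have hne : (Finset.range k).Nonempty := Finset.nonempty_range_iff.mpr (by omega)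
  -- a ≤ bb n for all n < k
  have habb : ∀ n, n < k → a ≤ bb n := by
    intro n
    induction n with
    | zero => intro hn; rw [← haa0]; exact hblock 0 (by omega)
    | succ n ih =>
      intro hn
      have h1 := ih (by omega)
      have h2 := hconsec n (by omega)
      have h3 := hblock (n + 1) hn
      omega
  have haaa : ∀ i, i < k → a ≤ aa i := by
    intro i hi
    cases i with
    | zero => omega
    | succ n =>
      have h1 := hconsec n (by omega)
      have h2 := habb n (by omega)
      omega
  -- bb is increasing in steps
  have hbbmono : ∀ d n, n + d < k → bb n ≤ bb (n + d) := by
    intro d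
    induction d with
    | zero => intro n _; show bb n ≤ bb n; omega
    | succ d ih =>
      intro n hn
      have h1 := ih n (by omega)
      have h2 := hconsec (n + d) (by omega)
      have h3 := hblock (n + d + 1) (by omega)
      show bb n ≤ bb (n + d + 1)
      omega
  have hbbb : ∀ n, n < k → bb n ≤ b := by
    intro n hn
    have := hbbmono (k - 1 - n) n (by omega)
    have heq : n + (k - 1 - n) = k - 1 := by omega
    rw [heq, hbbk] at this
    exact this
  -- block ranges are valid
  have h1i : ∀ i, i < k → 1 ≤ aa i := fun i hi => le_trans ha (haaa i hi)
  have hmi : ∀ i, i < k → bb i ≤ m := fun i hi => le_trans (hbbb i hi) hbm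
  -- splitting the sum
  have key : ∀ q : ℝ, ∀ n, n < k →
      ∑ i ∈ Finset.range (n + 1), ∑ j ∈ Finset.Icc (aa i) (bb i), R j q
        = ∑ j ∈ Finset.Icc a (bb n), R j q := by
    intro q n
    induction n with
    | zero => intro _; simp [haa0]
    | succ n ih =>
      intro hn
      rw [Finset.sum_range_succ, ih (by omega)]
      have hc := hconsec n (by omega)
      have h1 : a ≤ bb n := habb n (by omega)
      have h2 : bb n ≤ bb (n + 1) := by
        have := hblock (n + 1) hn; omega
      have e1 : Finset.Icc a (bb n) = Finset.Ioc (a - 1) (bb n) := by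
        rw [← Finset.Icc_add_one_left_eq_Ioc]; congr 1; omega
      have e2 : Finset.Icc a (bb (n + 1)) = Finset.Ioc (a - 1) (bb (n + 1)) := by
        rw [← Finset.Icc_add_one_left_eq_Ioc]; congr 1; omega
      have e3 : Finset.Icc (aa (n + 1)) (bb (n + 1)) = Finset.Ioc (bb n) (bb (n + 1)) := by
        rw [← Finset.Icc_add_one_left_eq_Ioc, hc]
      rw [e1, e2, e3]
      exact Finset.sum_Ioc_consecutive _ (by omega) h2
  have hsplit : ∀ q : ℝ, ∑ j ∈ Finset.Icc a b, R j q
      = ∑ i ∈ Finset.range k, ∑ j ∈ Finset.Icc (aa i) (bb i), R j q := by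
    intro q
    have := key q (k - 1) (by omega)
    have hk1 : k - 1 + 1 = k := by omega
    rw [hk1, hbbk] at this
    exact this.symm
  -- minimizers of the total sum
  have hTL : ∀ r, (∑ j ∈ Finset.Icc a b, R j (L a b)) ≤ ∑ j ∈ Finset.Icc a b, R j r :=
    (hmin a b ha hab hbm (L a b)).mpr ⟨le_refl _, hLU a b ha hab hbm⟩
  have hTU : ∀ r, (∑ j ∈ Finset.Icc a b, R j (U a b)) ≤ ∑ j ∈ Finset.Icc a b, R j r :=
    (hmin a b ha hab hbm (U a b)).mpr ⟨hLU a b ha hab hbm, le_refl _⟩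
  set mL := (Finset.range k).inf' hne fun i => L (aa i) (bb i) with hmL
  set ML := (Finset.range k).sup' hne fun i => L (aa i) (bb i) with hML
  set mU := (Finset.range k).inf' hne fun i => U (aa i) (bb i) with hmU
  set MU := (Finset.range k).sup' hne fun i => U (aa i) (bb i) with hMU
  refine ⟨?_, ?_, ?_, ?_⟩
  · -- mL ≤ L a b
    by_contra hcon
    push_neg at hcon
    have hlt : (∑ j ∈ Finset.Icc a b, R j mL) < ∑ j ∈ Finset.Icc a b, R j (L a b) := by
      rw [hsplit mL, hsplit (L a b)]
      apply Finset.sum_lt_sum_of_nonempty hne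
      intro i hi
      have hik : i < k := Finset.mem_range.mp hi
      have hLi : mL ≤ L (aa i) (bb i) := by rw [hmL]; exact Finset.inf'_le (fun j => L (aa j) (bb j)) hi
      exact hanti (aa i) (bb i) (h1i i hik) (hblock i hik) (hmi i hik)
        (Set.mem_Iic.mpr (le_of_lt (lt_of_lt_of_le hcon hLi))) (Set.mem_Iic.mpr hLi) hcon
    exact absurd (hTL mL) (not_le.mpr hlt)
  · -- L a b ≤ ML
    by_contra hcon
    push_neg at hcon
    have h1 : (∑ j ∈ Finset.Icc a b, R j (L a b)) < ∑ j ∈ Finset.Icc a b, R j ML :=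
      hanti a b ha hab hbm (Set.mem_Iic.mpr (le_of_lt hcon)) (Set.mem_Iic.mpr le_rfl) hcon
    have h2 : (∑ j ∈ Finset.Icc a b, R j ML) ≤ ∑ j ∈ Finset.Icc a b, R j (L a b) := by
      rw [hsplit ML, hsplit (L a b)]
      apply Finset.sum_le_sum
      intro i hi
      have hik : i < k := Finset.mem_range.mp hi
      have hLi : L (aa i) (bb i) ≤ ML := by rw [hML]; exact Finset.le_sup' (fun j => L (aa j) (bb j)) hi
      by_cases hcase : ML ≤ U (aa i) (bb i)
      · exact (hmin (aa i) (bb i) (h1i i hik) (hblock i hik) (hmi i hik) ML).mpr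
          ⟨hLi, hcase⟩ (L a b)
      · push_neg at hcase
        exact le_of_lt (hmono (aa i) (bb i) (h1i i hik) (hblock i hik) (hmi i hik)
          (Set.mem_Ici.mpr (le_of_lt hcase)) (Set.mem_Ici.mpr (le_of_lt (lt_trans hcase hcon))) hcon)
    linarith
  · -- mU ≤ U a b
    by_contra hcon
    push_neg at hcon
    have h1 : (∑ j ∈ Finset.Icc a b, R j (U a b)) < ∑ j ∈ Finset.Icc a b, R j mU :=
      hmono a b ha hab hbm (Set.mem_Ici.mpr le_rfl) (Set.mem_Ici.mpr (le_of_lt hcon)) hcon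
    have h2 : (∑ j ∈ Finset.Icc a b, R j mU) ≤ ∑ j ∈ Finset.Icc a b, R j (U a b) := by
      rw [hsplit mU, hsplit (U a b)]
      apply Finset.sum_le_sum
      intro i hi
      have hik : i < k := Finset.mem_range.mp hi
      have hUi : mU ≤ U (aa i) (bb i) := by rw [hmU]; exact Finset.inf'_le (fun j => U (aa j) (bb j)) hi
      by_cases hcase : L (aa i) (bb i) ≤ mU
      · exact (hmin (aa i) (bb i) (h1i i hik) (hblock i hik) (hmi i hik) mU).mpr
          ⟨hcase, hUi⟩ (U a b)
      · push_neg at hcase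
        exact le_of_lt (hanti (aa i) (bb i) (h1i i hik) (hblock i hik) (hmi i hik)
          (Set.mem_Iic.mpr (le_of_lt (lt_trans hcon hcase))) (Set.mem_Iic.mpr (le_of_lt hcase)) hcon)
    linarith
  · -- U a b ≤ MU
    by_contra hcon
    push_neg at hcon
    have hlt : (∑ j ∈ Finset.Icc a b, R j MU) < ∑ j ∈ Finset.Icc a b, R j (U a b) := by
      rw [hsplit MU, hsplit (U a b)]
      apply Finset.sum_lt_sum_of_nonempty hne
      intro i hi
      have hik : i < k := Finset.mem_range.mp hi
      have hUi : U (aa i) (bb i) ≤ MU := by rw [hMU]; exact Finset.le_sup' (fun j => U (aa j) (bb j)) hi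
      exact hmono (aa i) (bb i) (h1i i hik) (hblock i hik) (hmi i hik)
        (Set.mem_Ici.mpr hUi) (Set.mem_Ici.mpr (le_trans hUi (le_of_lt hcon))) hcon
    exact absurd (hTU MU) (not_le.mpr hlt)
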